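/- Let 𝔤 be a finite-dimensional complex Lie algebra, let N, Ñ be 𝔤-modules and E a finite-dimensional 𝔤-module. Assume N is a direct summand of Ñ as a 𝔤-module (there exist 𝔤-module maps i : N → Ñ and p : Ñ → N with p∘i = id), and Ñ is a direct summand of N⊗E as a 𝔤-module. Then F(N,Ñ), viewed as a right module over A := F(N,N) via precomposition, is a finitely generated projective right A-module, and A (as a right module over itself) is a direct summand of F(N,Ñ). -/

import Mathlib

open TensorProduct

/-- `f` belongs to the locally finite part `F(M,N)` of `Hom_ℂ(M,N)` under the adjoint action
`⁅x, f⁆ = x ∘ f - f ∘ x` of `L`: the `L`-submodule generated by `f` is finite-dimensional. -/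
def InF (L : Type) [LieRing L] [LieAlgebra ℂ L] {M N : Type}
    [AddCommGroup M] [Module ℂ M] [LieRingModule L M] [LieModule ℂ L M]
    [AddCommGroup N] [Module ℂ N] [LieRingModule L N] [LieModule ℂ L N]
    (f : M →ₗ[ℂ] N) : Prop :=
  ∃ V : LieSubmodule ℂ L (M →ₗ[ℂ] N), f ∈ V ∧ FiniteDimensional ℂ V.toSubmodule

variable (L : Type) [LieRing L] [LieAlgebra ℂ L]

/-- The locally finite part `F(M,N)` of `Hom_ℂ(M,N)`, as a `ℂ`-subspace. -/
def Fmod (M N : Type)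
    [AddCommGroup M] [Module ℂ M] [LieRingModule L M] [LieModule ℂ L M]
    [AddCommGroup N] [Module ℂ N] [LieRingModule L N] [LieModule ℂ L N] :
    Submodule ℂ (M →ₗ[ℂ] N) where
  carrier := {f | InF L f}
  zero_mem' := ⟨⊥, LieSubmodule.zero_mem ⊥, by
    rw [LieSubmodule.bot_toSubmodule]; infer_instance⟩
  add_mem' := by
    rintro f g ⟨V, hfV, hV⟩ ⟨W, hgW, hW⟩
    refine ⟨V ⊔ W, ?_, ?_⟩
    · exact add_mem ((LieSubmodule.mem_sup _ _ _).2 ⟨f, hfV, 0, W.zero_mem, by simp⟩)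
        ((LieSubmodule.mem_sup _ _ _).2 ⟨0, V.zero_mem, g, hgW, by simp⟩)
    · rw [LieSubmodule.sup_toSubmodule]
      exact Submodule.finiteDimensional_sup _ _
  smul_mem' := by
    rintro c f ⟨V, hfV, hV⟩
    exact ⟨V, V.smul_mem c hfV, hV⟩

section Aux

variable {L}
variable {M P E' : Type}
  [AddCommGroup M] [Module ℂ M] [LieRingModule L M] [LieModule ℂ L M]
  [AddCommGroup P] [Module ℂ P] [LieRingModule L P] [LieModule ℂ L P]
  [AddCommGroup E'] [Module ℂ E'] [LieRingModule L E'] [LieModule ℂ L E']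

theorem mem_Fmod_iff {f : M →ₗ[ℂ] P} : f ∈ Fmod L M P ↔ InF L f := Iff.rfl

theorem Fmod_comp_lieHom {Q : Type}
    [AddCommGroup Q] [Module ℂ Q] [LieRingModule L Q] [LieModule ℂ L Q]
    (φ : P →ₗ⁅ℂ,L⁆ Q) {f : M →ₗ[ℂ] P} (hf : f ∈ Fmod L M P) :
    φ.toLinearMap ∘ₗ f ∈ Fmod L M Q := by
  obtain ⟨V, hfV, hV⟩ := hf
  have key : ∀ (x : L) (h : M →ₗ[ℂ] P),
      ⁅x, φ.toLinearMap ∘ₗ h⁆ = φ.toLinearMap ∘ₗ ⁅x, h⁆ := by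
    intro x h; ext n
    simp [LieHom.lie_apply]
  refine ⟨⟨V.toSubmodule.map (LinearMap.llcomp ℂ M P Q φ.toLinearMap), ?_⟩, ?_, ?_⟩
  · rintro x g ⟨h, hh, rfl⟩
    exact ⟨⁅x, h⁆, V.lie_mem hh, (key x h).symm⟩
  · exact ⟨f, hfV, rfl⟩
  · infer_instance

/-- Component map `P ⊗ E' → P` given by a linear functional on `E'`. -/
noncomputable def cmap (ε : E' →ₗ[ℂ] ℂ) : P ⊗[ℂ] E' →ₗ[ℂ] P :=
  (TensorProduct.rid ℂ P).toLinearMap ∘ₗ LinearMap.lTensor P ε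

@[simp] theorem cmap_tmul (ε : E' →ₗ[ℂ] ℂ) (p : P) (e : E') :
    cmap ε (p ⊗ₜ[ℂ] e) = ε e • p := by
  simp [cmap]

theorem lie_basis_sum {ι : Type} [Fintype ι] (b : Module.Basis ι ℂ E') (x : L) (e : E') :
    ⁅x, e⁆ = ∑ s, b.repr e s • ⁅x, b s⁆ := by
  calc ⁅x, e⁆ = LieModule.toEnd ℂ L E' x e := rfl
    _ = LieModule.toEnd ℂ L E' x (∑ s, b.repr e s • b s) := by rw [b.sum_repr]
    _ = ∑ s, b.repr e s • ⁅x, b s⁆ := by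
        rw [map_sum]
        simp [LieModule.toEnd_apply_apply]

theorem cmap_lie {ι : Type} [Fintype ι] (b : Module.Basis ι ℂ E') (t : ι) (x : L) (w : P ⊗[ℂ] E') :
    ⁅x, cmap (b.coord t) w⁆ =
      cmap (b.coord t) ⁅x, w⁆ - ∑ s, b.coord t ⁅x, b s⁆ • cmap (b.coord s) w := by
  induction w using TensorProduct.induction_on with
  | zero => simp
  | tmul p e =>
      have hxe := lie_basis_sum b x e
      have hsum : ∑ s, b.coord t ⁅x, b s⁆ • cmap (b.coord s) (p ⊗ₜ[ℂ] e)
          = b.coord t ⁅x, e⁆ • p := by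
        rw [hxe, map_sum]
        simp only [cmap_tmul, map_smul, smul_eq_mul, smul_smul, Finset.sum_smul]
        exact Finset.sum_congr rfl fun s _ => by
          simp [Module.Basis.coord_apply, mul_comm]
      rw [TensorProduct.LieModule.lie_tmul_right, map_add, hsum]
      simp only [cmap_tmul, lie_smul]
      abel
  | add w₁ w₂ h1 h2 =>
      simp only [map_add, lie_add, h1, h2, Finset.smul_sum, smul_add, Finset.sum_add_distrib]
      abel

theorem Fmod_cmap_comp {ι : Type} [Fintype ι] (b : Module.Basis ι ℂ E') (t : ι)
    {f : M →ₗ[ℂ] P ⊗[ℂ] E'} (hf : f ∈ Fmod L M (P ⊗[ℂ] E')) :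
    cmap (b.coord t) ∘ₗ f ∈ Fmod L M P := by
  obtain ⟨V, hfV, hV⟩ := hf
  let W : Submodule ℂ (M →ₗ[ℂ] P) :=
    ⨆ s, V.toSubmodule.map (LinearMap.llcomp ℂ M (P ⊗[ℂ] E') P (cmap (b.coord s)))
  have hmap : ∀ (s : ι) (h : M →ₗ[ℂ] P ⊗[ℂ] E'), h ∈ V → cmap (b.coord s) ∘ₗ h ∈ W := by
    intro s h hh
    exact Submodule.mem_iSup_of_mem s ⟨h, hh, rfl⟩
  have key : ∀ (x : L) (s : ι) (h : M →ₗ[ℂ] P ⊗[ℂ] E'),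
      ⁅x, cmap (b.coord s) ∘ₗ h⁆ =
        cmap (b.coord s) ∘ₗ ⁅x, h⁆ - ∑ u, b.coord s ⁅x, b u⁆ • (cmap (b.coord u) ∘ₗ h) := by
    intro x s h; ext n
    simp only [LinearMap.sub_apply, LinearMap.coe_comp, Function.comp_apply,
      LieHom.lie_apply, LinearMap.sum_apply, LinearMap.smul_apply, map_sub, cmap_lie b s x (h n)]
    abel
  have hlie : ∀ (x : L) (g : M →ₗ[ℂ] P), g ∈ W → ⁅x, g⁆ ∈ W := by
    intro x g hg
    have hW : W ≤ Submodule.comap (LieModule.toEnd ℂ L (M →ₗ[ℂ] P) x : (_ →ₗ[ℂ] _)) W := by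
      refine iSup_le fun s => ?_
      rintro g ⟨h, hh, rfl⟩
      simp only [Submodule.mem_comap]
      have : (LieModule.toEnd ℂ L (M →ₗ[ℂ] P) x)
          ((LinearMap.llcomp ℂ M (P ⊗[ℂ] E') P (cmap (b.coord s))) h)
          = ⁅x, cmap (b.coord s) ∘ₗ h⁆ := rfl
      rw [this, key x s h]
      exact sub_mem (hmap s ⁅x, h⁆ (V.lie_mem hh))
        (Submodule.sum_mem _ fun u _ => Submodule.smul_mem _ _ (hmap u h hh))
    exact hW hg
  refine ⟨⟨W, fun {x g} hg => hlie x g hg⟩, hmap t f hfV, ?_⟩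
  exact Submodule.finiteDimensional_iSup _

/-- `p ↦ p ⊗ e`. -/
noncomputable def tmr (e : E') : P →ₗ[ℂ] P ⊗[ℂ] E' :=
  (TensorProduct.mk ℂ P E').flip e

@[simp] theorem tmr_apply (e : E') (p : P) : tmr e p = p ⊗ₜ[ℂ] e := rfl

theorem Fmod_tmr_comp {ι : Type} [Fintype ι] (b : Module.Basis ι ℂ E') (e : E')
    {f : M →ₗ[ℂ] P} (hf : f ∈ Fmod L M P) :
    (tmr e : P →ₗ[ℂ] P ⊗[ℂ] E') ∘ₗ f ∈ Fmod L M (P ⊗[ℂ] E') := by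
  obtain ⟨V, hfV, hV⟩ := hf
  let W : Submodule ℂ (M →ₗ[ℂ] P ⊗[ℂ] E') :=
    ⨆ s, V.toSubmodule.map (LinearMap.llcomp ℂ M P (P ⊗[ℂ] E') (tmr (b s)))
  have hmap : ∀ (s : ι) (h : M →ₗ[ℂ] P), h ∈ V → tmr (b s) ∘ₗ h ∈ W := by
    intro s h hh
    exact Submodule.mem_iSup_of_mem s ⟨h, hh, rfl⟩
  have key : ∀ (x : L) (s : ι) (h : M →ₗ[ℂ] P),
      ⁅x, tmr (b s) ∘ₗ h⁆ =
        tmr (b s) ∘ₗ ⁅x, h⁆ + ∑ u, b.coord u ⁅x, b s⁆ • (tmr (b u) ∘ₗ h) := by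
    intro x s h; ext n
    have hxe : ⁅x, b s⁆ = ∑ u, b.coord u ⁅x, b s⁆ • b u := (b.sum_repr ⁅x, b s⁆).symm
    simp only [LinearMap.add_apply, LinearMap.coe_comp, Function.comp_apply,
      LieHom.lie_apply, LinearMap.sum_apply, LinearMap.smul_apply, tmr_apply,
      TensorProduct.LieModule.lie_tmul_right, TensorProduct.sub_tmul]
    rw [show (h n) ⊗ₜ[ℂ] ⁅x, b s⁆ = ∑ u, b.coord u ⁅x, b s⁆ • (h n) ⊗ₜ[ℂ] b u by
      conv_lhs => rw [hxe]
      rw [TensorProduct.tmul_sum]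
      exact Finset.sum_congr rfl fun u _ => TensorProduct.tmul_smul _ _ _]
    abel
  have hlie : ∀ (x : L) (g : M →ₗ[ℂ] P ⊗[ℂ] E'), g ∈ W → ⁅x, g⁆ ∈ W := by
    intro x g hg
    have hW : W ≤ Submodule.comap (LieModule.toEnd ℂ L (M →ₗ[ℂ] P ⊗[ℂ] E') x : (_ →ₗ[ℂ] _)) W := by
      refine iSup_le fun s => ?_
      rintro g ⟨h, hh, rfl⟩
      simp only [Submodule.mem_comap]
      have : (LieModule.toEnd ℂ L (M →ₗ[ℂ] P ⊗[ℂ] E') x)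
          ((LinearMap.llcomp ℂ M P (P ⊗[ℂ] E') (tmr (b s))) h)
          = ⁅x, tmr (b s) ∘ₗ h⁆ := rfl
      rw [this, key x s h]
      exact add_mem (hmap s ⁅x, h⁆ (V.lie_mem hh))
        (Submodule.sum_mem _ fun u _ => Submodule.smul_mem _ _ (hmap u h hh))
    exact hW hg
  have hmem : (tmr e : P →ₗ[ℂ] P ⊗[ℂ] E') ∘ₗ f ∈ W := by
    have : (tmr e : P →ₗ[ℂ] P ⊗[ℂ] E') ∘ₗ f
        = ∑ s, b.repr e s • ((tmr (b s) : P →ₗ[ℂ] P ⊗[ℂ] E') ∘ₗ f) := by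
      ext n
      simp only [LinearMap.coe_comp, Function.comp_apply, tmr_apply, LinearMap.sum_apply,
        LinearMap.smul_apply]
      conv_lhs => rw [← b.sum_repr e]
      rw [TensorProduct.tmul_sum]
      exact Finset.sum_congr rfl fun u _ => TensorProduct.tmul_smul _ _ _
    rw [this]
    exact Submodule.sum_mem _ fun s _ => Submodule.smul_mem _ _ (hmap s f hfV)
  refine ⟨⟨W, fun {x g} hg => hlie x g hg⟩, hmem, ?_⟩
  exact Submodule.finiteDimensional_iSup _

theorem sum_tmr_cmap {ι : Type} [Fintype ι] (b : Module.Basis ι ℂ E') (w : P ⊗[ℂ] E') :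
    ∑ t, (cmap (b.coord t) w) ⊗ₜ[ℂ] (b t) = w := by
  induction w using TensorProduct.induction_on with
  | zero => simp
  | tmul p e =>
      simp only [cmap_tmul]
      calc ∑ t, ((b.coord t e) • p) ⊗ₜ[ℂ] b t = ∑ t, p ⊗ₜ[ℂ] (b.coord t e • b t) := by
            exact Finset.sum_congr rfl fun t _ => by
              rw [TensorProduct.tmul_smul, TensorProduct.smul_tmul']
        _ = p ⊗ₜ[ℂ] e := by
            rw [← TensorProduct.tmul_sum]
            congr 1
            exact b.sum_repr e
  | add w₁ w₂ h1 h2 => simp only [map_add, TensorProduct.add_tmul, Finset.sum_add_distrib, h1, h2]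

end Aux

set_option synthInstance.maxHeartbeats 1000000 in
set_option maxHeartbeats 2000000 in
/-- Suppose `N` is a direct summand of `Ñ` and `Ñ` is a direct summand of
`N ⊗ E` as `L`-modules (`E` finite-dimensional). Then `F(N,Ñ)`, as a right module over
`A := F(N,N)` via precomposition (encoded as a left `Aᵐᵒᵖ`-module structure pinned down by
`hsmul`), is a finitely generated projective right `A`-module, and `A` (as a right module
over itself) is a direct summand of `F(N,Ñ)`. -/
theorem statement5 [FiniteDimensional ℂ L] (N Ntilde E : Type)
    [AddCommGroup N] [Module ℂ N] [LieRingModule L N] [LieModule ℂ L N]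
    [AddCommGroup Ntilde] [Module ℂ Ntilde] [LieRingModule L Ntilde] [LieModule ℂ L Ntilde]
    [AddCommGroup E] [Module ℂ E] [LieRingModule L E] [LieModule ℂ L E]
    [FiniteDimensional ℂ E]
    (i : N →ₗ⁅ℂ,L⁆ Ntilde) (p : Ntilde →ₗ⁅ℂ,L⁆ N) (hpi : ∀ n : N, p (i n) = n)
    (j : Ntilde →ₗ⁅ℂ,L⁆ (N ⊗[ℂ] E)) (q : (N ⊗[ℂ] E) →ₗ⁅ℂ,L⁆ Ntilde)
    (hqj : ∀ m : Ntilde, q (j m) = m)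
    (A : Subalgebra ℂ (Module.End ℂ N)) (hA : ∀ f : Module.End ℂ N, f ∈ A ↔ InF L f)
    [Module (↥A)ᵐᵒᵖ ↥(Fmod L N Ntilde)]
    (hsmul : ∀ (a : ↥A) (ψ : ↥(Fmod L N Ntilde)),
      ((MulOpposite.op a • ψ : ↥(Fmod L N Ntilde)) : N →ₗ[ℂ] Ntilde) =
        (ψ : N →ₗ[ℂ] Ntilde) ∘ₗ (a : Module.End ℂ N)) :
    Module.Finite (↥A)ᵐᵒᵖ ↥(Fmod L N Ntilde) ∧
    Module.Projective (↥A)ᵐᵒᵖ ↥(Fmod L N Ntilde) ∧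
    ∃ (u : ↥A →ₗ[(↥A)ᵐᵒᵖ] ↥(Fmod L N Ntilde))
      (v : ↥(Fmod L N Ntilde) →ₗ[(↥A)ᵐᵒᵖ] ↥A), v.comp u = LinearMap.id := by
    classical
  have memA : ∀ {f : Module.End ℂ N}, f ∈ Fmod L N N → f ∈ A := fun hf => (hA _).2 hf
  have memA' : ∀ (a : ↥A), (a : Module.End ℂ N) ∈ Fmod L N N := fun a => (hA _).1 a.2
  have hsmul' : ∀ (c : (↥A)ᵐᵒᵖ) (ψ : ↥(Fmod L N Ntilde)),
      ((c • ψ : ↥(Fmod L N Ntilde)) : N →ₗ[ℂ] Ntilde) =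
        (ψ : N →ₗ[ℂ] Ntilde) ∘ₗ (c.unop : Module.End ℂ N) := by
    intro c ψ
    rw [← MulOpposite.op_unop c]
    exact hsmul c.unop ψ
  have hAsmul : ∀ (c : (↥A)ᵐᵒᵖ) (a : ↥A),
      ((c • a : ↥A) : Module.End ℂ N) = (a : Module.End ℂ N) ∘ₗ (c.unop : Module.End ℂ N) :=
    fun c a => rfl
  -- the direct summand maps u, v
  let u : ↥A →ₗ[(↥A)ᵐᵒᵖ] ↥(Fmod L N Ntilde) :=
    { toFun := fun a => ⟨i.toLinearMap ∘ₗ (a : Module.End ℂ N),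
        Fmod_comp_lieHom i (memA' a)⟩
      map_add' := fun a a' => Subtype.ext <| by
        simp [LinearMap.comp_add]
      map_smul' := fun c a => Subtype.ext <| by
        rw [RingHom.id_apply, hsmul']
        simp only [hAsmul]
        rw [LinearMap.comp_assoc] }
  let v : ↥(Fmod L N Ntilde) →ₗ[(↥A)ᵐᵒᵖ] ↥A :=
    { toFun := fun ψ => ⟨p.toLinearMap ∘ₗ (ψ : N →ₗ[ℂ] Ntilde),
        memA (Fmod_comp_lieHom p ψ.2)⟩
      map_add' := fun ψ ψ' => Subtype.ext <| by
        simp [LinearMap.comp_add]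
      map_smul' := fun c ψ => Subtype.ext <| by
        rw [RingHom.id_apply, hAsmul]
        show p.toLinearMap ∘ₗ ((c • ψ : ↥(Fmod L N Ntilde)) : N →ₗ[ℂ] Ntilde) = _
        rw [hsmul', LinearMap.comp_assoc] }
  have huv : v.comp u = LinearMap.id := by
    apply LinearMap.ext
    intro a
    apply Subtype.ext
    apply LinearMap.ext
    intro n
    exact hpi _
  -- the retraction exhibiting F(N,Ñ) as a summand of A^k
  set k := Module.finrank ℂ E with hk
  set b : Module.Basis (Fin k) ℂ E := Module.finBasis ℂ E with hb
  let s : ↥(Fmod L N Ntilde) →ₗ[(↥A)ᵐᵒᵖ] (Fin k → ↥A) :=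
    { toFun := fun ψ t => ⟨cmap (b.coord t) ∘ₗ (j.toLinearMap ∘ₗ (ψ : N →ₗ[ℂ] Ntilde)),
        memA (Fmod_cmap_comp b t (Fmod_comp_lieHom j ψ.2))⟩
      map_add' := fun ψ ψ' => funext fun t => Subtype.ext <| by
        simp [LinearMap.comp_add]
      map_smul' := fun c ψ => funext fun t => Subtype.ext <| by
        rw [RingHom.id_apply]
        show cmap (b.coord t) ∘ₗ (j.toLinearMap ∘ₗ ((c • ψ : ↥(Fmod L N Ntilde)) : N →ₗ[ℂ] Ntilde))
          = ((c • _ : ↥A) : Module.End ℂ N)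
        rw [hAsmul, hsmul', LinearMap.comp_assoc, LinearMap.comp_assoc] }
  let S : (Fin k → ↥A) → (N →ₗ[ℂ] N ⊗[ℂ] E) := fun a =>
    ∑ t, (tmr (b t) : N →ₗ[ℂ] N ⊗[ℂ] E) ∘ₗ ((a t : Module.End ℂ N))
  have hSmem : ∀ a, S a ∈ Fmod L N (N ⊗[ℂ] E) := fun a =>
    Submodule.sum_mem _ fun t _ => Fmod_tmr_comp b (b t) (memA' (a t))
  let r : (Fin k → ↥A) →ₗ[(↥A)ᵐᵒᵖ] ↥(Fmod L N Ntilde) :=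
    { toFun := fun a => ⟨q.toLinearMap ∘ₗ S a, Fmod_comp_lieHom q (hSmem a)⟩
      map_add' := fun a a' => Subtype.ext <| by
        have : S (a + a') = S a + S a' := by
          simp only [S, Pi.add_apply, Subalgebra.coe_add, LinearMap.comp_add,
            Finset.sum_add_distrib]
        show q.toLinearMap ∘ₗ S (a + a') = _
        rw [this, LinearMap.comp_add]
        rfl
      map_smul' := fun c a => Subtype.ext <| by
        rw [RingHom.id_apply]
        have : S (c • a) = S a ∘ₗ (c.unop : Module.End ℂ N) := by
          apply LinearMap.ext; intro n
          simp only [S, LinearMap.sum_apply, LinearMap.coe_comp, Function.comp_apply,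
            Pi.smul_apply, hAsmul]
        show q.toLinearMap ∘ₗ S (c • a) = ((c • _ : ↥(Fmod L N Ntilde)) : N →ₗ[ℂ] Ntilde)
        rw [this, hsmul', ← LinearMap.comp_assoc] }
  have hrs : ∀ ψ, r (s ψ) = ψ := by
    intro ψ
    apply Subtype.ext
    apply LinearMap.ext
    intro n
    show q.toLinearMap (S (s ψ) n) = (ψ : N →ₗ[ℂ] Ntilde) n
    have : S (s ψ) n = j ((ψ : N →ₗ[ℂ] Ntilde) n) := by
      simp only [S, LinearMap.sum_apply, LinearMap.coe_comp, Function.comp_apply]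
      show (∑ t, (cmap (b.coord t) (j ((ψ : N →ₗ[ℂ] Ntilde) n))) ⊗ₜ[ℂ] b t) = _
      exact sum_tmr_cmap b _
    rw [this]
    exact hqj _
  -- A is finite and free over Aᵐᵒᵖ
  haveI hfinA : Module.Finite (↥A)ᵐᵒᵖ ↥A := by
    refine ⟨⟨{1}, ?_⟩⟩
    rw [eq_top_iff]
    intro a _
    have ha : a = (MulOpposite.op a) • (1 : ↥A) := by
      rw [MulOpposite.smul_eq_mul_unop, MulOpposite.unop_op, one_mul]
    rw [ha]
    exact Submodule.smul_mem _ _ (Submodule.subset_span (by simp))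
  let eAop : ↥A ≃ₗ[(↥A)ᵐᵒᵖ] (Fin 1 → (↥A)ᵐᵒᵖ) :=
    { toFun := fun a _ => MulOpposite.op a
      map_add' := fun a a' => funext fun _ => rfl
      map_smul' := fun c a => funext fun _ => by
        show MulOpposite.op (c • a) = c * MulOpposite.op a
        rw [MulOpposite.smul_eq_mul_unop, MulOpposite.op_mul, MulOpposite.op_unop]
      invFun := fun f => (f 0).unop
      left_inv := fun a => rfl
      right_inv := fun f => funext fun t => by
        show MulOpposite.op ((f 0).unop) = f t
        rw [Subsingleton.elim t 0, MulOpposite.op_unop] }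
  haveI hfreeA : Module.Free (↥A)ᵐᵒᵖ ↥A := Module.Free.of_basis (Module.Basis.ofEquivFun eAop)
  refine ⟨Module.Finite.of_surjective r (fun ψ => ⟨s ψ, hrs ψ⟩),
    Module.Projective.of_split s r (LinearMap.ext hrs), u, v, huv⟩
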